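/- Let G be a central extension of k^× by a finite abelian group K whose order is invertible in k. If K' ⊆ K is a subgroup on which the commutator form [-,-]_G is identically 1, then G admits a level subgroup 𝒦 (a subgroup mapping isomorphically onto its image in K) with π(𝒦) = K'. -/

import Mathlib

open scoped commutatorElement

/-- The units of an algebraically closed field are a rootable (divisible) group. -/
noncomputable def unitsRootable (k : Type) [Field k] [IsAlgClosed k] : RootableBy kˣ ℕ where
  root a n :=
    if h : n = 0 then 1
    else
      let z := Classical.choose (IsAlgClosed.exists_pow_nat_eq (a : k) (Nat.pos_of_ne_zero h))
      Units.mk0 z (by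
        intro hz
        have hzn : z ^ n = (a : k) :=
          Classical.choose_spec (IsAlgClosed.exists_pow_nat_eq (a : k) (Nat.pos_of_ne_zero h))
        rw [hz, zero_pow h] at hzn
        exact a.ne_zero hzn.symm)
  root_zero a := by simp
  root_cancel {n} a h := by
    ext
    have hzn := Classical.choose_spec (IsAlgClosed.exists_pow_nat_eq (a : k) (Nat.pos_of_ne_zero h))
    simp [h, hzn]

noncomputable def unitsAdditiveDivisible (k : Type) [Field k] [IsAlgClosed k] :
    DivisibleBy (Additive kˣ) ℤ := by
  letI : RootableBy kˣ ℕ := unitsRootable k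
  letI : RootableBy kˣ ℤ := Group.rootableByIntOfRootableByNat kˣ
  exact
    { div := fun a n => Additive.ofMul (RootableBy.root a.toMul n)
      div_zero := fun a => by
        simp only [RootableBy.root_zero]
        rfl
      div_cancel := fun {n} a h => by
        apply Additive.toMul.injective
        rw [toMul_zsmul]
        exact RootableBy.root_cancel a.toMul h }

/-- Let `1 → kˣ →ι G →π K → 0` be a central extension of `kˣ` by a finite
abelian group `K` whose order is invertible in `k` (`k` algebraically closed).  If `K'` is a
subgroup of `K` on which the commutator form is identically `1` (i.e. any two elements of `G`
lying over `K'` commute), then `G` admits a level subgroup `𝒦` (a subgroup on which `π` is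
injective) with `π(𝒦) = K'`. -/
theorem stmt3 {k : Type} [Field k] [IsAlgClosed k] {K : Type} [CommGroup K] [Finite K]
    {G : Type} [Group G]
    (hchar : ¬ (ringChar k ∣ Nat.card K))
    (ι : kˣ →* G) (π : G →* K)
    (hinj : Function.Injective ι) (hsurj : Function.Surjective π)
    (hexact : π.ker = ι.range)
    (hcentral : ι.range ≤ Subgroup.center G)
    (K' : Subgroup K)
    (htriv : ∀ a b : G, π a ∈ K' → π b ∈ K' → ⁅a, b⁆ = 1) :
    ∃ 𝒦 : Subgroup G, Set.InjOn π 𝒦 ∧ 𝒦.map π = K' := by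
  classical
  -- the preimage of `K'` in `G`
  set H : Subgroup G := K'.comap π with hH
  -- `H` is commutative by `htriv`
  letI : CommGroup H :=
    { (inferInstance : Group H) with
      mul_comm := fun a b => by
        have := htriv a.1 b.1 a.2 b.2
        rw [commutatorElement_eq_one_iff_mul_comm] at this
        exact Subtype.ext this }
  -- `ι` lands in `H`
  have hιmem : ∀ x : kˣ, ι x ∈ H := by
    intro x
    have : ι x ∈ π.ker := hexact ▸ ⟨x, rfl⟩
    have hπ : π (ι x) = 1 := this
    simpa [hH, Subgroup.mem_comap, hπ] using K'.one_mem
  let ι' : kˣ →* H := ι.codRestrict H hιmem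
  have hι'inj : Function.Injective ι' := fun a b hab => hinj (congrArg Subtype.val hab)
  -- use injectivity of the divisible group `kˣ` to get a retraction `r : H →* kˣ`
  letI : DivisibleBy (Additive kˣ) ℤ := unitsAdditiveDivisible k
  have hbaer : Module.Baer ℤ (Additive kˣ) := Module.Baer.of_divisible _
  have hinjmod : Module.Injective ℤ (Additive kˣ) := hbaer.injective
  let f : Additive kˣ →ₗ[ℤ] Additive H := (MonoidHom.toAdditive ι').toIntLinearMap
  have hfinj : Function.Injective f := fun a b hab => hι'inj hab
  obtain ⟨h, hh⟩ := hinjmod.out f hfinj (LinearMap.id : Additive kˣ →ₗ[ℤ] Additive kˣ)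
  let r : H →* kˣ := MonoidHom.mk' (fun g => (h (Additive.ofMul g)).toMul) (by
    intro a b
    have : h (Additive.ofMul (a * b)) = h (Additive.ofMul a) + h (Additive.ofMul b) := by
      rw [show Additive.ofMul (a * b) = Additive.ofMul a + Additive.ofMul b from rfl, map_add]
    simp [this])
  have hr : ∀ x : kˣ, r (ι' x) = x := by
    intro x
    have := hh (Additive.ofMul x)
    simpa [r, f] using congrArg Additive.toMul this
  -- the level subgroup
  refine ⟨r.ker.map H.subtype, ?_, ?_⟩
  · rintro a ⟨a', ha', rfl⟩ b ⟨b', hb', rfl⟩ hab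
    simp only [Subgroup.coe_subtype]
    have hmem : (a' * b'⁻¹ : H) ∈ r.ker := mul_mem ha' (inv_mem hb')
    have hπ1 : π ((a' : G) * (b' : G)⁻¹) = 1 := by
      simp only [map_mul, map_inv]
      rw [show π (a' : G) = π (b' : G) from hab]
      group
    have : (a' : G) * (b' : G)⁻¹ ∈ ι.range := hexact ▸ hπ1
    obtain ⟨x, hx⟩ := this
    have hxH : ι' x = a' * b'⁻¹ := Subtype.ext hx
    have : x = 1 := by
      have h1 : r (ι' x) = x := hr x
      rw [hxH] at h1
      rw [hmem] at h1
      exact h1.symm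
    rw [this] at hxH
    have : (a' : G) * (b' : G)⁻¹ = 1 := by
      have := congrArg Subtype.val hxH
      simpa using this.symm
    exact mul_inv_eq_one.mp this
  · apply le_antisymm
    · rintro x ⟨g, ⟨g', _, rfl⟩, rfl⟩
      exact g'.2
    · intro x hx
      obtain ⟨g, hg⟩ := hsurj x
      have hgH : g ∈ H := by simpa [hH, Subgroup.mem_comap, hg] using hx
      set u : kˣ := r ⟨g, hgH⟩ with hu
      set g' : H := ⟨g, hgH⟩ * (ι' u)⁻¹ with hg'
      have hker : g' ∈ r.ker := by
        rw [MonoidHom.mem_ker, hg', map_mul, map_inv, hr u, ← hu, mul_inv_cancel]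
      refine ⟨(g' : G), ⟨g', hker, rfl⟩, ?_⟩
      have hπι : π (ι u) = 1 := by
        have : ι u ∈ π.ker := hexact ▸ ⟨u, rfl⟩
        exact this
      have : (g' : G) = g * (ι u)⁻¹ := rfl
      rw [this, map_mul, map_inv, hg, hπι]
      group
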